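/- arXiv:1510.06131 — 7 statements merged into one kernel-verified Lean document; each statement's English description precedes it below -/
import Mathlib

section
/- With ∑_{i=1}^{k}[C_i] = K, pairwise intersections nonnegative, and each [C_i] satisfying adjunction [C_i]² + 2 - 2g_i = [C_i]·K: if k ≥ 2 then every g_i = 0; and if k = 1 and g_1 = 1 then [C_1]·[C_1] = [C_1]·K, i.e. [C_1]·(K - [C_1]) = 0. -/
open Finset

/-- Same setting as before, with the connectedness hypothesis: if k ≥ 2 then each
    C_i pairs positively with the sum of the others.  Conclusions: if k ≥ 2 then
    every g_i = 0; and if k = 1 and g_i = 1 then C_i·(K - C_i) = 0. -/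
theorem stmt_4 {L : Type*} [AddCommGroup L]
    (ip : L →ₗ[ℤ] L →ₗ[ℤ] ℤ) (hsymm : ∀ x y : L, ip x y = ip y x)
    (k : ℕ) (K : L) (C : Fin k → L) (g : Fin k → ℕ)
    (hsum : ∑ i, C i = K)
    (hadj : ∀ i, ip (C i) (C i) + 2 - 2 * (g i : ℤ) = ip (C i) K)
    (hnn : ∀ i j, i ≠ j → 0 ≤ ip (C i) (C j))
    (hconn : 2 ≤ k → ∀ i, 0 < ip (C i) (∑ j ∈ univ.erase i, C j)) :
    (2 ≤ k → ∀ i, g i = 0) ∧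
    (k = 1 → ∀ i, g i = 1 → ip (C i) (K - C i) = 0) := by
  have key : ∀ i, ip (C i) (K - C i) = 2 - 2 * (g i : ℤ) := by
    intro i
    have h := hadj i
    have : ip (C i) K - ip (C i) (C i) = 2 - 2 * (g i : ℤ) := by linarith
    simpa [map_sub] using this
  constructor
  · intro hk i
    have h1 := hconn hk i
    have h2 : (∑ j ∈ univ.erase i, C j) = K - C i := by
      rw [Finset.sum_erase_eq_sub (Finset.mem_univ i), hsum]
    rw [h2, key i] at h1
    have : (g i : ℤ) < 1 := by linarith
    exact_mod_cast by omega
  · intro _ i hg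
    rw [key i, hg]
    norm_num
end

section
/- In H_2(S²×S², ℤ) with basis f, s (f² = s² = 0, f·s = 1) and K = 2f + 2s, every unordered decomposition of K into k sphere classes (each satisfying adjunction C² + 2 = C·K) with pairwise nonnegative intersections and forming a cycle (each class meets exactly two others, or for k=2 the two classes meet with total intersection 2) satisfies k ≤ 4. Moreover for k = 4 the decomposition is, up to symmetry, ( f - b·s, f + b·s, s, s ) for some integer b ≥ 0. -/
open Finset

/-- Intersection pairing on H₂(S²×S², ℤ): basis f, s with f² = 0, s² = 0, f·s = 1. -/
def pairSS (v w : ℤ × ℤ) : ℤ := v.1 * w.2 + v.2 * w.1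

/-- The anticanonical class K = 2f + 2s. -/
def KSS : ℤ × ℤ := (2, 2)

/-- Structure of an orthogonal pair of sphere classes. -/
lemma orth_pair (x y : ℤ × ℤ)
    (hx : x.1 = 1 ∨ x.2 = 1) (hy : y.1 = 1 ∨ y.2 = 1)
    (h : x.1 * y.2 + x.2 * y.1 = 0) :
    (x.1 = 1 ∧ y.1 = 1 ∧ x.2 + y.2 = 0) ∨ (x.2 = 1 ∧ y.2 = 1 ∧ x.1 + y.1 = 0) := by
  rcases hx with hx1 | hx2 <;> rcases hy with hy1 | hy2
  · exact Or.inl ⟨hx1, hy1, by rw [hx1, hy1] at h; linarith⟩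
  · rw [hx1, hy2] at h
    have hm : x.2 * (-y.1) = 1 := by linear_combination -h
    rcases Int.mul_eq_one_iff_eq_one_or_neg_one.mp hm with ⟨h1, h2⟩ | ⟨h1, h2⟩
    · exact Or.inr ⟨h1, hy2, by omega⟩
    · exact Or.inl ⟨hx1, by omega, by omega⟩
  · rw [hx2, hy1] at h
    have hm : (-x.1) * y.2 = 1 := by linear_combination -h
    rcases Int.mul_eq_one_iff_eq_one_or_neg_one.mp hm with ⟨h1, h2⟩ | ⟨h1, h2⟩
    · exact Or.inr ⟨hx2, h2, by omega⟩
    · exact Or.inl ⟨by omega, hy1, by omega⟩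
  · exact Or.inr ⟨hx2, hy2, by rw [hx2, hy2] at h; linarith⟩

/-- A class orthogonal to two classes pairing to 1 cannot satisfy adjunction. -/
lemma key5 (u v w : ℤ × ℤ)
    (e1 : u.1 * v.2 + u.2 * v.1 = 1)
    (e2 : w.1 * u.2 + w.2 * u.1 = 0)
    (e3 : w.1 * v.2 + w.2 * v.1 = 0)
    (adj : w.1 * w.2 + w.2 * w.1 + 2 = w.1 * 2 + w.2 * 2) : False := by
  have hD : u.1 * v.2 - u.2 * v.1 ≠ 0 := by
    intro h
    have h2 : 2 * (u.1 * v.2) = 1 := by linarith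
    rcases le_or_gt (u.1 * v.2) 0 with h3 | h3
    · linarith
    · have := Int.add_one_le_iff.mpr h3
      linarith
  have hx : w.1 * (u.1 * v.2 - u.2 * v.1) = 0 := by linear_combination u.1 * e3 - v.1 * e2
  have hy : w.2 * (u.1 * v.2 - u.2 * v.1) = 0 := by linear_combination v.2 * e2 - u.2 * e3
  have hx0 : w.1 = 0 := by rcases mul_eq_zero.mp hx with h | h; exact h; exact absurd h hD
  have hy0 : w.2 = 0 := by rcases mul_eq_zero.mp hy with h | h; exact h; exact absurd h hD
  rw [hx0, hy0] at adj
  norm_num at adj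

/-- Any decomposition of K = 2f + 2s into k ≥ 2 sphere classes with pairwise
    nonnegative intersections forming a cycle (consecutive pairings 1, others 0 for
    k ≥ 3; total pairing 2 for k = 2) has k ≤ 4, and for k = 4 the decomposition is,
    up to permutation and the symmetry swapping f and s,
    (f - b·s, f + b·s, s, s) for some integer b ≥ 0. -/
theorem stmt_5 (k : ℕ) (hk : 2 ≤ k) (C : Fin k → ℤ × ℤ)
    (hsum : ∑ i, C i = KSS)
    (hadj : ∀ i, pairSS (C i) (C i) + 2 = pairSS (C i) KSS)
    (hnn : ∀ i j, i ≠ j → 0 ≤ pairSS (C i) (C j))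
    (hcyc2 : k = 2 → ∀ i j, i ≠ j → pairSS (C i) (C j) = 2)
    (hcyc : 3 ≤ k → ∀ i j : Fin k, i ≠ j →
      pairSS (C i) (C j) =
        if (i.val + 1) % k = j.val ∨ (j.val + 1) % k = i.val then 1 else 0) :
    k ≤ 4 ∧
    ∀ (h4 : k = 4), ∃ b : ℤ, 0 ≤ b ∧ ∃ σ : Equiv.Perm (Fin k), ∃ sw : Bool,
      ∀ i : Fin 4, C (σ (Fin.cast h4.symm i)) =
        (fun v : ℤ × ℤ => if sw then v.swap else v)
          (![(1, -b), (1, b), (0, 1), (0, 1)] i) := by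
  have hle : k ≤ 4 := by
    by_contra hcon
    have hk5 : 5 ≤ k := by omega
    have hk3 : 3 ≤ k := by omega
    have e1 : pairSS (C ⟨1, by omega⟩) (C ⟨2, by omega⟩) = 1 := by
      rw [hcyc hk3 ⟨1, by omega⟩ ⟨2, by omega⟩ (Fin.ne_of_val_ne (by norm_num))]
      rw [if_pos (Or.inl (show (1 + 1) % k = 2 from Nat.mod_eq_of_lt (by omega)))]
    have m5 : (4 + 1) % k = 0 ∨ (4 + 1) % k = 5 := by
      rcases Nat.lt_or_ge k 6 with h6 | h6
      · left; have hk : k = 5 := by omega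
        simp [hk]
      · right; exact Nat.mod_eq_of_lt (by omega)
    have e2 : pairSS (C ⟨4, by omega⟩) (C ⟨1, by omega⟩) = 0 := by
      rw [hcyc hk3 ⟨4, by omega⟩ ⟨1, by omega⟩ (Fin.ne_of_val_ne (by norm_num))]
      rw [if_neg]
      push_neg
      refine ⟨?_, ?_⟩
      · show (4 + 1) % k ≠ 1
        rcases m5 with h | h <;> omega
      · show (1 + 1) % k ≠ 4
        rw [Nat.mod_eq_of_lt (by omega)]
        omega
    have e3 : pairSS (C ⟨4, by omega⟩) (C ⟨2, by omega⟩) = 0 := by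
      rw [hcyc hk3 ⟨4, by omega⟩ ⟨2, by omega⟩ (Fin.ne_of_val_ne (by norm_num))]
      rw [if_neg]
      push_neg
      refine ⟨?_, ?_⟩
      · show (4 + 1) % k ≠ 2
        rcases m5 with h | h <;> omega
      · show (2 + 1) % k ≠ 4
        rw [Nat.mod_eq_of_lt (by omega)]
        omega
    have adj4 := hadj ⟨4, by omega⟩
    simp only [pairSS, KSS] at e1 e2 e3 adj4
    exact key5 _ _ _ e1 e2 e3 adj4
  refine ⟨hle, ?_⟩
  intro h4
  subst h4
  have hk3 : (3:ℕ) ≤ 4 := by norm_num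
  have p01 := hcyc hk3 0 1 (by decide)
  have p02 := hcyc hk3 0 2 (by decide)
  have p13 := hcyc hk3 1 3 (by decide)
  rw [if_pos (by decide)] at p01
  rw [if_neg (by decide)] at p02
  rw [if_neg (by decide)] at p13
  rw [Fin.sum_univ_four] at hsum
  have hsum1 : (C 0).1 + (C 1).1 + (C 2).1 + (C 3).1 = 2 := by
    have := congrArg Prod.fst hsum; simpa [KSS] using this
  have hsum2 : (C 0).2 + (C 1).2 + (C 2).2 + (C 3).2 = 2 := by
    have := congrArg Prod.snd hsum; simpa [KSS] using this
  have adj : ∀ i : Fin 4, (C i).1 = 1 ∨ (C i).2 = 1 := by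
    intro i
    have h := hadj i
    simp only [pairSS, KSS] at h
    have h2 : 2 * (((C i).1 - 1) * ((C i).2 - 1)) = 0 := by linear_combination h
    have h3 : ((C i).1 - 1) * ((C i).2 - 1) = 0 := by linarith
    rcases mul_eq_zero.mp h3 with h4 | h4
    · exact Or.inl (by linarith)
    · exact Or.inr (by linarith)
  simp only [pairSS] at p01 p02 p13
  have o02 := orth_pair (C 0) (C 2) (adj 0) (adj 2) p02
  have o13 := orth_pair (C 1) (C 3) (adj 1) (adj 3) p13
  rcases o02 with ⟨ha0, ha2, hb02⟩ | ⟨hb0, hb2, ha02⟩ <;>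
    rcases o13 with ⟨ha1, ha3, hb13⟩ | ⟨hb1, hb3, ha13⟩
  · -- all first coordinates 1 : contradicts sum = 2
    exfalso; omega
  · -- C0=(1,p), C2=(1,-p), C1=(q,1), C3=(-q,1)
    have hpq : (C 0).2 * (C 1).1 = 0 := by rw [ha0, hb1] at p01; linarith
    rcases mul_eq_zero.mp hpq with hp | hq
    · -- p = 0 : C0=C2=(1,0), sw = true
      have hC0 : C 0 = (1, 0) := Prod.ext_iff.mpr ⟨ha0, hp⟩
      have hC2 : C 2 = (1, 0) := Prod.ext_iff.mpr ⟨ha2, by omega⟩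
      rcases le_or_gt 0 ((C 1).1) with hq0 | hq0
      · have hC1 : C 1 = ((C 1).1, 1) := Prod.ext_iff.mpr ⟨rfl, hb1⟩
        have hC3 : C 3 = (-(C 1).1, 1) := Prod.ext_iff.mpr ⟨by omega, hb3⟩
        refine ⟨(C 1).1, hq0, ⟨fun i => ![3,1,0,2] i, fun i => ![2,1,3,0] i,
          by intro i; fin_cases i <;> rfl, by intro i; fin_cases i <;> rfl⟩, true, ?_⟩
        intro i; fin_cases i <;> first | exact hC0 | exact hC1 | exact hC2 | exact hC3
      · have hC1 : C 1 = (-(-(C 1).1), 1) := Prod.ext_iff.mpr ⟨by omega, hb1⟩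
        have hC3 : C 3 = (-(C 1).1, 1) := Prod.ext_iff.mpr ⟨by omega, hb3⟩
        refine ⟨-(C 1).1, by omega, ⟨fun i => ![1,3,0,2] i, fun i => ![2,0,3,1] i,
          by intro i; fin_cases i <;> rfl, by intro i; fin_cases i <;> rfl⟩, true, ?_⟩
        intro i; fin_cases i <;> first | exact hC0 | exact hC1 | exact hC2 | exact hC3
    · -- q = 0 : C1=C3=(0,1), sw = false
      have hC1 : C 1 = (0, 1) := Prod.ext_iff.mpr ⟨hq, hb1⟩
      have hC3 : C 3 = (0, 1) := Prod.ext_iff.mpr ⟨by omega, hb3⟩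
      rcases le_or_gt 0 ((C 0).2) with hp0 | hp0
      · have hC0 : C 0 = (1, (C 0).2) := Prod.ext_iff.mpr ⟨ha0, rfl⟩
        have hC2 : C 2 = (1, -(C 0).2) := Prod.ext_iff.mpr ⟨ha2, by omega⟩
        refine ⟨(C 0).2, hp0, ⟨fun i => ![2,0,1,3] i, fun i => ![1,2,0,3] i,
          by intro i; fin_cases i <;> rfl, by intro i; fin_cases i <;> rfl⟩, false, ?_⟩
        intro i; fin_cases i <;> first | exact hC0 | exact hC1 | exact hC2 | exact hC3
      · have hC0 : C 0 = (1, -(-(C 0).2)) := Prod.ext_iff.mpr ⟨ha0, by omega⟩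
        have hC2 : C 2 = (1, -(C 0).2) := Prod.ext_iff.mpr ⟨ha2, by omega⟩
        refine ⟨-(C 0).2, by omega, ⟨fun i => ![0,2,1,3] i, fun i => ![0,2,1,3] i,
          by intro i; fin_cases i <;> rfl, by intro i; fin_cases i <;> rfl⟩, false, ?_⟩
        intro i; fin_cases i <;> first | exact hC0 | exact hC1 | exact hC2 | exact hC3
  · -- C0=(p,1), C2=(-p,1), C1=(1,q), C3=(1,-q)
    have hpq : (C 0).1 * (C 1).2 = 0 := by rw [hb0, ha1] at p01; linarith
    rcases mul_eq_zero.mp hpq with hp | hq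
    · -- p = 0 : C0=C2=(0,1), sw = false
      have hC0 : C 0 = (0, 1) := Prod.ext_iff.mpr ⟨hp, hb0⟩
      have hC2 : C 2 = (0, 1) := Prod.ext_iff.mpr ⟨by omega, hb2⟩
      rcases le_or_gt 0 ((C 1).2) with hq0 | hq0
      · have hC1 : C 1 = (1, (C 1).2) := Prod.ext_iff.mpr ⟨ha1, rfl⟩
        have hC3 : C 3 = (1, -(C 1).2) := Prod.ext_iff.mpr ⟨ha3, by omega⟩
        refine ⟨(C 1).2, hq0, ⟨fun i => ![3,1,0,2] i, fun i => ![2,1,3,0] i,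
          by intro i; fin_cases i <;> rfl, by intro i; fin_cases i <;> rfl⟩, false, ?_⟩
        intro i; fin_cases i <;> first | exact hC0 | exact hC1 | exact hC2 | exact hC3
      · have hC1 : C 1 = (1, -(-(C 1).2)) := Prod.ext_iff.mpr ⟨ha1, by omega⟩
        have hC3 : C 3 = (1, -(C 1).2) := Prod.ext_iff.mpr ⟨ha3, by omega⟩
        refine ⟨-(C 1).2, by omega, ⟨fun i => ![1,3,0,2] i, fun i => ![2,0,3,1] i,
          by intro i; fin_cases i <;> rfl, by intro i; fin_cases i <;> rfl⟩, false, ?_⟩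
        intro i; fin_cases i <;> first | exact hC0 | exact hC1 | exact hC2 | exact hC3
    · -- q = 0 : C1=C3=(1,0), sw = true
      have hC1 : C 1 = (1, 0) := Prod.ext_iff.mpr ⟨ha1, hq⟩
      have hC3 : C 3 = (1, 0) := Prod.ext_iff.mpr ⟨ha3, by omega⟩
      rcases le_or_gt 0 ((C 0).1) with hp0 | hp0
      · have hC0 : C 0 = ((C 0).1, 1) := Prod.ext_iff.mpr ⟨rfl, hb0⟩
        have hC2 : C 2 = (-(C 0).1, 1) := Prod.ext_iff.mpr ⟨by omega, hb2⟩
        refine ⟨(C 0).1, hp0, ⟨fun i => ![2,0,1,3] i, fun i => ![1,2,0,3] i,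
          by intro i; fin_cases i <;> rfl, by intro i; fin_cases i <;> rfl⟩, true, ?_⟩
        intro i; fin_cases i <;> first | exact hC0 | exact hC1 | exact hC2 | exact hC3
      · have hC0 : C 0 = (-(-(C 0).1), 1) := Prod.ext_iff.mpr ⟨by omega, hb0⟩
        have hC2 : C 2 = (-(C 0).1, 1) := Prod.ext_iff.mpr ⟨by omega, hb2⟩
        refine ⟨-(C 0).1, by omega, ⟨fun i => ![0,2,1,3] i, fun i => ![0,2,1,3] i,
          by intro i; fin_cases i <;> rfl, by intro i; fin_cases i <;> rfl⟩, true, ?_⟩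
        intro i; fin_cases i <;> first | exact hC0 | exact hC1 | exact hC2 | exact hC3
  · -- all second coordinates 1 : contradicts sum = 2
    exfalso; omega
end

section
/- In H_2(ℂP² # conj(ℂP²), ℤ) with f² = 0, f·s = 1, s² = 1 and K = f + 2s, every 3-cycle decomposition K = [C_1] + [C_2] + [C_3] into sphere classes with [C_i]·[C_j] = 1 for all i ≠ j is, up to permutation, ([C_1],[C_2],[C_3]) = (a f + s, -a f + s, f) for some integer a. -/
/-- Intersection pairing on H₂(ℂP² # conj(ℂP²), ℤ): f² = 0, f·s = 1, s² = 1. -/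
def pairF (v w : ℤ × ℤ) : ℤ := v.1 * w.2 + v.2 * w.1 + v.2 * w.2

/-- The anticanonical class K = f + 2s. -/
def KF : ℤ × ℤ := (1, 2)

/-- Every 3-cycle decomposition K = C₁ + C₂ + C₃ into sphere classes with all
    pairwise intersections 1 is, up to permutation, (a f + s, -a f + s, f). -/
theorem stmt_7 (C : Fin 3 → ℤ × ℤ)
    (hadj : ∀ i, pairF (C i) (C i) + 2 = pairF (C i) KF)
    (hsum : ∑ i, C i = KF)
    (hint : ∀ i j, i ≠ j → pairF (C i) (C j) = 1) :
    ∃ σ : Equiv.Perm (Fin 3), ∃ a : ℤ,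
      C (σ 0) = (a, 1) ∧ C (σ 1) = (-a, 1) ∧ C (σ 2) = (1, 0) := by
  have hs : C 0 + C 1 + C 2 = KF := by
    rw [← hsum]; simp [Fin.sum_univ_three]
  have hx : (C 0).1 + (C 1).1 + (C 2).1 = 1 := by
    have := congrArg Prod.fst hs; simpa [KF] using this
  have hy : (C 0).2 + (C 1).2 + (C 2).2 = 2 := by
    have := congrArg Prod.snd hs; simpa [KF] using this
  have key : ∀ i, (C i).2 = 1 ∨ 2 * (C i).1 + (C i).2 = 2 := by
    intro i
    have h := hadj i
    simp [pairF, KF] at h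
    have h2 : ((C i).2 - 1) * (2 * (C i).1 + (C i).2 - 2) = 0 := by
      linear_combination h
    rcases mul_eq_zero.mp h2 with h3 | h3
    · left; omega
    · right; omega
  rcases key 0 with h0 | h0 <;> rcases key 1 with h1 | h1 <;> rcases key 2 with h2 | h2
  · -- all y = 1: contradiction
    omega
  · -- y0 = y1 = 1, C2 = (1,0)
    refine ⟨1, (C 0).1, ?_, ?_, ?_⟩ <;>
      · show C _ = _
        ext <;> simp <;> omega
  · refine ⟨Equiv.swap 1 2, (C 0).1, ?_, ?_, ?_⟩ <;>
      · show C _ = _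
        simp [Equiv.swap_apply_def]
        ext <;> simp <;> omega
  · omega
  · refine ⟨Equiv.swap 0 2, (C 2).1, ?_, ?_, ?_⟩ <;>
      · show C _ = _
        simp [Equiv.swap_apply_def]
        ext <;> simp <;> omega
  · omega
  · omega
  · omega
end

section
/- In the lattice with basis f, s (f² = 0, f·s = 1, s² = 1) and K = f + 2s, there is no decomposition of K into 5 or more sphere classes forming a cycle (consecutive pairings 1, nonconsecutive pairings 0). -/
/-- Pure algebra: five vectors in the rank-2 lattice cannot have this
    pairing pattern. -/
lemma key_alg (v0 v1 v2 v3 v4 : ℤ × ℤ)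
    (h01 : pairF v0 v1 = 1) (h02 : pairF v0 v2 = 0) (h03 : pairF v0 v3 = 0)
    (h21 : pairF v2 v1 = 1) (h31 : pairF v3 v1 = 0) (h34 : pairF v3 v4 = 1) :
    False := by
  obtain ⟨a, b⟩ := v0
  obtain ⟨p, q⟩ := v1
  obtain ⟨c, d⟩ := v2
  obtain ⟨e, g⟩ := v3
  obtain ⟨x, y⟩ := v4
  simp only [pairF] at h01 h02 h03 h21 h31 h34
  have hA : (a + b) * (d * e - c * g) = 0 := by linear_combination e * h02 - c * h03
  have hB : b * (d * e - c * g) = 0 := by linear_combination d * h03 - g * h02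
  have hdet : d * e - c * g = 0 := by
    linear_combination (-(d * e - c * g)) * h01 + q * hA + p * hB
  have hg : g = 0 := by linear_combination (-g) * h21 + d * h31 - q * hdet
  have he : e = 0 := by linear_combination (-e) * h21 + c * h31 + (p + q) * hdet
  rw [hg, he] at h34
  simp at h34

/-- There is no decomposition of K = f + 2s into k ≥ 5 sphere classes forming a
    cycle (consecutive pairings 1, nonconsecutive pairings 0). -/
theorem stmt_8 (k : ℕ) (hk : 5 ≤ k) (C : Fin k → ℤ × ℤ)
    (hadj : ∀ i, pairF (C i) (C i) + 2 = pairF (C i) KF)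
    (hsum : ∑ i, C i = KF)
    (hcyc : ∀ i j : Fin k, i ≠ j →
      pairF (C i) (C j) =
        if (i.val + 1) % k = j.val ∨ (j.val + 1) % k = i.val then 1 else 0) :
    False := by
  have m1 : (0 + 1) % k = 1 := Nat.mod_eq_of_lt (by omega)
  have m2 : (1 + 1) % k = 2 := Nat.mod_eq_of_lt (by omega)
  have m3 : (2 + 1) % k = 3 := Nat.mod_eq_of_lt (by omega)
  have m4 : (3 + 1) % k = 4 := Nat.mod_eq_of_lt (by omega)
  have h01 := hcyc ⟨0, by omega⟩ ⟨1, by omega⟩ (Fin.ne_of_val_ne (by norm_num))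
  have h02 := hcyc ⟨0, by omega⟩ ⟨2, by omega⟩ (Fin.ne_of_val_ne (by norm_num))
  have h03 := hcyc ⟨0, by omega⟩ ⟨3, by omega⟩ (Fin.ne_of_val_ne (by norm_num))
  have h21 := hcyc ⟨2, by omega⟩ ⟨1, by omega⟩ (Fin.ne_of_val_ne (by norm_num))
  have h31 := hcyc ⟨3, by omega⟩ ⟨1, by omega⟩ (Fin.ne_of_val_ne (by norm_num))
  have h34 := hcyc ⟨3, by omega⟩ ⟨4, by omega⟩ (Fin.ne_of_val_ne (by norm_num))
  simp only [Fin.val_mk] at h01 h02 h03 h21 h31 h34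
  simp only [m1, m2, m3, m4] at h01 h02 h03 h21 h31 h34
  norm_num at h01 h02 h03 h21 h31 h34
  exact key_alg _ _ _ _ _ h01 h02 h03 h21 h31 h34
end

section
/- In H_2(S²×S², ℤ) (f² = s² = 0, f·s = 1, K = 2f + 2s), there is no k-cycle decomposition of K into sphere classes with k ≥ 5. -/
/-- There is no decomposition of K = 2f + 2s into k ≥ 5 sphere classes forming a
    cycle (consecutive pairings 1, nonconsecutive pairings 0). -/
theorem stmt_9 (k : ℕ) (hk : 5 ≤ k) (C : Fin k → ℤ × ℤ)
    (hadj : ∀ i, pairSS (C i) (C i) + 2 = pairSS (C i) KSS)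
    (hsum : ∑ i, C i = KSS)
    (hcyc : ∀ i j : Fin k, i ≠ j →
      pairSS (C i) (C j) =
        if (i.val + 1) % k = j.val ∨ (j.val + 1) % k = i.val then 1 else 0) :
    False := by
  -- sphere condition: each class has first or second coordinate 1
  have hsph : ∀ i, (C i).1 = 1 ∨ (C i).2 = 1 := by
    intro i
    have h := hadj i
    simp only [pairSS, KSS] at h
    have h0 : ((C i).1 - 1) * ((C i).2 - 1) = 0 := by
      have h2 : 2 * (((C i).1 - 1) * ((C i).2 - 1)) = 0 := by linear_combination h
      linarith
    rcases mul_eq_zero.mp h0 with h' | h'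
    · left; linarith
    · right; linarith
  -- nonadjacent pairs pair to zero
  have hpair0 : ∀ i j : Fin k, i ≠ j →
      ¬((i.val + 1) % k = j.val ∨ (j.val + 1) % k = i.val) →
      (C i).1 * (C j).2 + (C i).2 * (C j).1 = 0 := by
    intro i j hne hna
    have h := hcyc i j hne
    simp only [pairSS] at h
    rw [if_neg hna] at h
    exact h
  -- key structure lemma for nonadjacent pairs
  have key : ∀ i j : Fin k, i ≠ j →
      ¬((i.val + 1) % k = j.val ∨ (j.val + 1) % k = i.val) →
      ((C i).1 = 1 ∧ (C j).1 = 1 ∧ (C i).2 + (C j).2 = 0) ∨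
      ((C i).2 = 1 ∧ (C j).2 = 1 ∧ (C i).1 + (C j).1 = 0) := by
    intro i j hne hna
    have h0 := hpair0 i j hne hna
    rcases hsph i with hi | hi <;> rcases hsph j with hj | hj
    · left; refine ⟨hi, hj, ?_⟩; rw [hi, hj] at h0; linarith
    · rw [hi, hj] at h0
      have hu : (C j).1 = 1 ∨ (C j).1 = -1 :=
        Int.isUnit_iff.mp (IsUnit.of_mul_eq_one (a := (C j).1) (-(C i).2) (by linarith))
      rcases hu with h | h
      · left; refine ⟨hi, h, ?_⟩; rw [h] at h0; linarith
      · right; refine ⟨by rw [h] at h0; linarith, hj, by rw [hi, h]; ring⟩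
    · rw [hi, hj] at h0
      have hu : (C i).1 = 1 ∨ (C i).1 = -1 :=
        Int.isUnit_iff.mp (IsUnit.of_mul_eq_one (a := (C i).1) (-(C j).2) (by linarith))
      rcases hu with h | h
      · left; refine ⟨h, hj, ?_⟩; rw [h] at h0; linarith
      · right; refine ⟨hi, by rw [h] at h0; linarith, by rw [hj, h]; ring⟩
    · right; refine ⟨hi, hj, ?_⟩; rw [hi, hj] at h0; linarith
  -- arithmetic helpers on the cyclic adjacency
  have hmod : ∀ i : Fin k, (i.val + 1) % k = if i.val + 1 = k then 0 else i.val + 1 := by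
    intro i
    by_cases h : i.val + 1 = k
    · simp [h]
    · rw [if_neg h, Nat.mod_eq_of_lt (by have := i.isLt; omega)]
  have hadjiff : ∀ i j : Fin k, ((i.val + 1) % k = j.val ∨ (j.val + 1) % k = i.val) ↔
      (j.val = i.val + 1 ∨ i.val = j.val + 1 ∨ (i.val + 1 = k ∧ j.val = 0) ∨
        (j.val + 1 = k ∧ i.val = 0)) := by
    intro i j
    rw [hmod i, hmod j]
    have hi := i.isLt; have hj := j.isLt
    split_ifs <;> omega
  have hvalne : ∀ i j : Fin k, i ≠ j → i.val ≠ j.val := by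
    intro i j hne h; exact hne (Fin.ext h)
  -- no triangles
  have htri : ∀ i j l : Fin k, i ≠ j → j ≠ l → i ≠ l →
      ((i.val + 1) % k = j.val ∨ (j.val + 1) % k = i.val) →
      ((j.val + 1) % k = l.val ∨ (l.val + 1) % k = j.val) →
      ((i.val + 1) % k = l.val ∨ (l.val + 1) % k = i.val) → False := by
    intro i j l h1 h2 h3 a1 a2 a3
    rw [hadjiff] at a1 a2 a3
    have := hvalne i j h1; have := hvalne j l h2; have := hvalne i l h3
    have := i.isLt; have := j.isLt; have := l.isLt
    omega
  -- at most two vertices adjacent to a given vertex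
  have hstar : ∀ y i j l : Fin k, i ≠ j → j ≠ l → i ≠ l →
      ((i.val + 1) % k = y.val ∨ (y.val + 1) % k = i.val) →
      ((j.val + 1) % k = y.val ∨ (y.val + 1) % k = j.val) →
      ((l.val + 1) % k = y.val ∨ (y.val + 1) % k = l.val) → False := by
    intro y i j l h1 h2 h3 a1 a2 a3
    rw [hadjiff] at a1 a2 a3
    have := hvalne i j h1; have := hvalne j l h2; have := hvalne i l h3
    have := i.isLt; have := j.isLt; have := l.isLt; have := y.isLt
    omega
  -- component sums
  have haS : ∑ i, (C i).1 = 2 := by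
    have h := congrArg Prod.fst hsum
    rw [show (KSS.1 : ℤ) = 2 from rfl] at h
    rw [← h]
    exact (map_sum (AddMonoidHom.fst ℤ ℤ) C Finset.univ).symm
  have hbS : ∑ i, (C i).2 = 2 := by
    have h := congrArg Prod.snd hsum
    rw [show (KSS.2 : ℤ) = 2 from rfl] at h
    rw [← h]
    exact (map_sum (AddMonoidHom.snd ℤ ℤ) C Finset.univ).symm
  -- there is a vertex with second coordinate ≠ 1
  have hYne : ∃ y : Fin k, (C y).2 ≠ 1 := by
    by_contra h
    push_neg at h
    have : ∑ i, (C i).2 = (k : ℤ) := by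
      rw [Finset.sum_congr rfl fun i _ => h i]
      simp [Finset.card_univ]
    omega
  have hXne : ∃ y : Fin k, (C y).1 ≠ 1 := by
    by_contra h
    push_neg at h
    have : ∑ i, (C i).1 = (k : ℤ) := by
      rw [Finset.sum_congr rfl fun i _ => h i]
      simp [Finset.card_univ]
    omega
  -- any vertex with first coord ≠ 1 is adjacent to any vertex with second coord ≠ 1
  have hXY : ∀ x y : Fin k, (C x).1 ≠ 1 → (C y).2 ≠ 1 →
      ((x.val + 1) % k = y.val ∨ (y.val + 1) % k = x.val) := by
    intro x y hx hy
    have hxy : x ≠ y := by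
      intro h; rw [h] at hx; rcases hsph y with h' | h' <;> [exact hx h'; exact hy h']
    by_contra hna
    rcases key x y hxy hna with ⟨h1, _, _⟩ | ⟨_, h2, _⟩
    · exact hx h1
    · exact hy h2
  -- main case split: are there two distinct vertices with first coordinate ≠ 1?
  by_cases hX2 : ∃ x1 x2 : Fin k, x1 ≠ x2 ∧ (C x1).1 ≠ 1 ∧ (C x2).1 ≠ 1
  · obtain ⟨x1, x2, hne12, hx1, hx2⟩ := hX2
    obtain ⟨y, hy⟩ := hYne
    have hy1 : (C y).1 = 1 := (hsph y).resolve_right hy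
    have hx1y : x1 ≠ y := fun h => hx1 (h ▸ hy1)
    have hx2y : x2 ≠ y := fun h => hx2 (h ▸ hy1)
    have ha1 := hXY x1 y hx1 hy
    have ha2 := hXY x2 y hx2 hy
    -- x1 and x2 are nonadjacent (else triangle with y)
    have hna12 : ¬((x1.val + 1) % k = x2.val ∨ (x2.val + 1) % k = x1.val) := by
      intro hadj12
      exact htri x1 x2 y hne12 hx2y hx1y hadj12 ha2 ha1
    have hkey := (key x1 x2 hne12 hna12).resolve_left (fun ⟨h, _, _⟩ => hx1 h)
    obtain ⟨_, _, hsum12⟩ := hkey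
    -- all other vertices have first coordinate 1
    have hrest : ∀ i : Fin k, i ≠ x1 → i ≠ x2 → (C i).1 = 1 := by
      intro i hi1 hi2
      by_contra hi
      exact hstar y i x1 x2 hi1 hne12 hi2 (hXY i y hi hy) ha1 ha2
    -- sum up first coordinates
    have hsub : ({x1, x2} : Finset (Fin k)) ⊆ Finset.univ := Finset.subset_univ _
    have hsplit := Finset.sum_sdiff (f := fun i => (C i).1) hsub
    rw [haS] at hsplit
    have hpair : ∑ i ∈ ({x1, x2} : Finset (Fin k)), (C i).1 = 0 := by
      rw [Finset.sum_pair hne12]; linarith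
    have hconst : ∑ i ∈ Finset.univ \ ({x1, x2} : Finset (Fin k)), (C i).1
        = ((k - 2 : ℕ) : ℤ) := by
      rw [Finset.sum_congr rfl (fun i hi => by
        simp only [Finset.mem_sdiff, Finset.mem_insert, Finset.mem_singleton] at hi
        push_neg at hi
        exact hrest i hi.2.1 hi.2.2)]
      rw [Finset.sum_const, Finset.card_sdiff_of_subset hsub, Finset.card_univ, Fintype.card_fin,
        Finset.card_pair hne12]
      simp
    rw [hconst, hpair] at hsplit
    omega
  · by_cases hY2 : ∃ y1 y2 : Fin k, y1 ≠ y2 ∧ (C y1).2 ≠ 1 ∧ (C y2).2 ≠ 1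
    · obtain ⟨y1, y2, hne12, hy1, hy2⟩ := hY2
      obtain ⟨x, hx⟩ := hXne
      have hx2 : (C x).2 = 1 := (hsph x).resolve_left hx
      have hy1x : y1 ≠ x := fun h => hy1 (h ▸ hx2)
      have hy2x : y2 ≠ x := fun h => hy2 (h ▸ hx2)
      have ha1 := hXY x y1 hx hy1
      have ha2 := hXY x y2 hx hy2
      have hna12 : ¬((y1.val + 1) % k = y2.val ∨ (y2.val + 1) % k = y1.val) := by
        intro hadj12
        exact htri y1 y2 x hne12 hy2x hy1x hadj12 (Or.symm ha2) (Or.symm ha1)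
      have hkey := (key y1 y2 hne12 hna12).resolve_right (fun ⟨h, _, _⟩ => hy1 h)
      obtain ⟨_, _, hsum12⟩ := hkey
      have hrest : ∀ i : Fin k, i ≠ y1 → i ≠ y2 → (C i).2 = 1 := by
        intro i hi1 hi2
        by_contra hi
        exact hstar x i y1 y2 hi1 hne12 hi2 (Or.symm (hXY x i hx hi)) (Or.symm ha1) (Or.symm ha2)
      have hsub : ({y1, y2} : Finset (Fin k)) ⊆ Finset.univ := Finset.subset_univ _
      have hsplit := Finset.sum_sdiff (f := fun i => (C i).2) hsub
      rw [hbS] at hsplit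
      have hpair : ∑ i ∈ ({y1, y2} : Finset (Fin k)), (C i).2 = 0 := by
        rw [Finset.sum_pair hne12]; linarith
      have hconst : ∑ i ∈ Finset.univ \ ({y1, y2} : Finset (Fin k)), (C i).2
          = ((k - 2 : ℕ) : ℤ) := by
        rw [Finset.sum_congr rfl (fun i hi => by
          simp only [Finset.mem_sdiff, Finset.mem_insert, Finset.mem_singleton] at hi
          push_neg at hi
          exact hrest i hi.2.1 hi.2.2)]
        rw [Finset.sum_const, Finset.card_sdiff_of_subset hsub, Finset.card_univ, Fintype.card_fin,
          Finset.card_pair hne12]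
        simp
      rw [hconst, hpair] at hsplit
      omega
    · -- at most one exception of each type: at least k-2 ≥ 3 vertices equal (1,1),
      -- pairwise adjacent, giving a triangle
      push_neg at hX2 hY2
      set D : Finset (Fin k) := Finset.univ.filter (fun i => (C i).1 = 1 ∧ (C i).2 = 1) with hDdef
      have hDc : Dᶜ.card ≤ 2 := by
        have hsubc : Dᶜ ⊆ (Finset.univ.filter (fun i => (C i).1 ≠ 1)) ∪
            (Finset.univ.filter (fun i => (C i).2 ≠ 1)) := by
          intro i hi
          simp only [hDdef, Finset.mem_compl, Finset.mem_filter, Finset.mem_univ, true_and,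
            Finset.mem_union] at hi ⊢
          tauto
        have h1 : (Finset.univ.filter (fun i => (C i).1 ≠ 1)).card ≤ 1 :=
          Finset.card_le_one.mpr (by
            intro a ha b hb
            simp only [Finset.mem_filter] at ha hb
            by_contra hne
            exact hb.2 (hX2 a b hne ha.2))
        have h2 : (Finset.univ.filter (fun i => (C i).2 ≠ 1)).card ≤ 1 :=
          Finset.card_le_one.mpr (by
            intro a ha b hb
            simp only [Finset.mem_filter] at ha hb
            by_contra hne
            exact hb.2 (hY2 a b hne ha.2))
        calc Dᶜ.card ≤ _ := Finset.card_le_card hsubc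
          _ ≤ _ := Finset.card_union_le _ _
          _ ≤ 2 := by omega
      have hDcard : 2 < D.card := by
        have hcc : D.card + Dᶜ.card = k := by
          rw [Finset.card_add_card_compl, Fintype.card_fin]
        omega
      obtain ⟨p, hp, q, hq, r, hr, hpq, hpr, hqr⟩ := Finset.two_lt_card.mp hDcard
      simp only [hDdef, Finset.mem_filter, Finset.mem_univ, true_and] at hp hq hr
      have hDadj : ∀ i j : Fin k, i ≠ j → (C i).1 = 1 → (C i).2 = 1 → (C j).1 = 1 →
          (C j).2 = 1 → ((i.val + 1) % k = j.val ∨ (j.val + 1) % k = i.val) := by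
        intro i j hne hi1 hi2 hj1 hj2
        by_contra hna
        rcases key i j hne hna with ⟨_, _, h⟩ | ⟨_, _, h⟩ <;> omega
      exact htri p q r hpq hqr hpr
        (hDadj p q hpq hp.1 hp.2 hq.1 hq.2)
        (hDadj q r hqr hq.1 hq.2 hr.1 hr.2)
        (hDadj p r hpr hp.1 hp.2 hr.1 hr.2)
end

section
/- Let V be a finite-dimensional real vector space with two linear complex structures J₀, J₁ (J_i² = −Id) and bilinear forms ω₀, ω₁ such that ω_i(v, J_i v) > 0 for all nonzero v (compatibility positivity). Let W ⊂ V be a subspace invariant under both J₀ and J₁, and β a bilinear form on V/W with β(π(v), π(J₀ v)) > 0 and β(π(v), π(J₁ v)) > 0 for all v ∉ W, where π: V → V/W is the projection. Then, since the unit sphere of V is compact, there exists K ≥ 0 such that for all t ∈ [0,1] and all nonzero v ∈ V, ((1−t)ω₀ + tω₁ + K·π*β)(v, J₀ v) > 0 whenever v ∉ W, and ((1−t)ω₀ + tω₁)(v, J₀ v) > 0 for v ∈ W, v ≠ 0. -/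
private lemma quad_cont {n : ℕ} (B : (Fin n → ℝ) →ₗ[ℝ] (Fin n → ℝ) →ₗ[ℝ] ℝ)
    (T : (Fin n → ℝ) →ₗ[ℝ] (Fin n → ℝ)) : Continuous fun x => B x (T x) := by
  have h1 : Continuous fun x => (LinearMap.toContinuousLinearMap (B x) : (Fin n → ℝ) →L[ℝ] ℝ) :=
    (LinearMap.toContinuousLinearMap.toLinearMap.comp B).continuous_of_finiteDimensional
  have h2 : Continuous fun x => T x := T.continuous_of_finiteDimensional
  have h3 := h1.clm_apply h2
  simpa using h3

private lemma pos_of_inv_sq (c E : ℝ) (hc : 0 < c) (h : 0 < c⁻¹ * (c⁻¹ * E)) : 0 < E := by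
  have hc' : c ≠ 0 := hc.ne'
  have h2 := mul_pos (mul_pos hc hc) h
  have h3 : c * c * (c⁻¹ * (c⁻¹ * E)) = E := by field_simp
  rwa [h3] at h2

private lemma sphere_bound {n : ℕ} (q₀ q₁ b : (Fin n → ℝ) → ℝ)
    (hq₀ : Continuous q₀) (hq₁ : Continuous q₁) (hb : Continuous b)
    (hbnn : ∀ x, 0 ≤ b x)
    (hpos : ∀ x : Fin n → ℝ, ‖x‖ = 1 → b x = 0 → 0 < q₀ x ∧ 0 < q₁ x) :
    ∃ K : ℝ, 0 ≤ K ∧ ∀ x : Fin n → ℝ, ‖x‖ = 1 → ∀ t ∈ Set.Icc (0:ℝ) 1,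
      0 < (1 - t) * q₀ x + t * q₁ x + K * b x := by
  set g : (Fin n → ℝ) → ℝ := fun x => min (q₀ x) (q₁ x) with hg
  have hgc : Continuous g := hq₀.min hq₁
  set S : Set (Fin n → ℝ) := Metric.sphere 0 1 with hS
  set C : Set (Fin n → ℝ) := S ∩ {x | g x ≤ 0} with hC
  have hmemS : ∀ x : Fin n → ℝ, x ∈ S ↔ ‖x‖ = 1 := fun x => mem_sphere_zero_iff_norm
  have hCcomp : IsCompact C :=
    (isCompact_sphere 0 1).inter_right (isClosed_le hgc continuous_const)
  have hbposC : ∀ x ∈ C, 0 < b x := by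
    intro x hx
    rcases (hbnn x).lt_or_eq with h | h
    · exact h
    · exfalso
      obtain ⟨h0, h1⟩ := hpos x ((hmemS x).1 hx.1) h.symm
      have hgx : 0 < g x := lt_min h0 h1
      have := hx.2
      simp only [Set.mem_setOf_eq] at this
      linarith
  obtain ⟨b₀, hb₀pos, hb₀⟩ : ∃ b₀ > 0, ∀ x ∈ C, b₀ ≤ b x := by
    rcases C.eq_empty_or_nonempty with h | h
    · exact ⟨1, one_pos, by simp [h]⟩
    · obtain ⟨x₀, hx₀, hmin⟩ := hCcomp.exists_isMinOn h hb.continuousOn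
      exact ⟨b x₀, hbposC x₀ hx₀, hmin⟩
  obtain ⟨M, hM⟩ : ∃ M : ℝ, ∀ x ∈ S, M ≤ g x := by
    rcases S.eq_empty_or_nonempty with h | h
    · exact ⟨0, by simp [h]⟩
    · obtain ⟨x₀, _, hmin⟩ := (isCompact_sphere (0 : Fin n → ℝ) 1).exists_isMinOn h hgc.continuousOn
      exact ⟨g x₀, hmin⟩
  refine ⟨max 0 ((1 - M) / b₀), le_max_left _ _, ?_⟩
  intro x hx t ht
  have hxS : x ∈ S := (hmemS x).2 hx
  set K := max 0 ((1 - M) / b₀) with hK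
  have hK0 : (0:ℝ) ≤ K := le_max_left _ _
  have hconv : min (q₀ x) (q₁ x) ≤ (1 - t) * q₀ x + t * q₁ x := by
    have h1 := mul_nonneg (sub_nonneg.2 ht.2) (sub_nonneg.2 (min_le_left (q₀ x) (q₁ x)))
    have h2 := mul_nonneg ht.1 (sub_nonneg.2 (min_le_right (q₀ x) (q₁ x)))
    nlinarith
  by_cases hgx : g x ≤ 0
  · have hxC : x ∈ C := ⟨hxS, hgx⟩
    have h1 : (1 - M) / b₀ ≤ K := le_max_right _ _
    have h2 : 1 - M ≤ K * b₀ := (div_le_iff₀ hb₀pos).1 h1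
    have h3 : K * b₀ ≤ K * b x := mul_le_mul_of_nonneg_left (hb₀ x hxC) hK0
    have h4 : M ≤ g x := hM x hxS
    simp only [hg] at hconv hgx h4
    linarith
  · push_neg at hgx
    have h5 := mul_nonneg hK0 (hbnn x)
    simp only [hg] at hconv hgx
    linarith

/-- Linear-algebraic core of the Thurston trick: V a finite-dimensional real vector
    space, J₀, J₁ complex structures, ω₀, ω₁ antisymmetric bilinear forms compatible
    with J₀, J₁ respectively, W a J₀- and J₁-invariant subspace on which both ω_i are
    J₀-positive, and β a bilinear form on V/W with β(πv, πJ_i v) > 0 for v ∉ W.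
    Then there is K ≥ 0 such that for all t ∈ [0,1], ((1-t)ω₀ + tω₁ + K·π*β)(v, J₀v) > 0
    for v ∉ W, and ((1-t)ω₀ + tω₁)(v, J₀v) > 0 for nonzero v ∈ W. -/
theorem stmt_13 {V : Type*} [AddCommGroup V] [Module ℝ V] [FiniteDimensional ℝ V]
    (J₀ J₁ : V →ₗ[ℝ] V)
    (hJ₀ : ∀ v, J₀ (J₀ v) = -v) (hJ₁ : ∀ v, J₁ (J₁ v) = -v)
    (ω₀ ω₁ : V →ₗ[ℝ] V →ₗ[ℝ] ℝ)
    (hω₀a : ∀ v w, ω₀ v w = -ω₀ w v) (hω₁a : ∀ v w, ω₁ v w = -ω₁ w v)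
    (h₀ : ∀ v : V, v ≠ 0 → 0 < ω₀ v (J₀ v))
    (h₁ : ∀ v : V, v ≠ 0 → 0 < ω₁ v (J₁ v))
    (W : Submodule ℝ V)
    (hW₀ : ∀ w ∈ W, J₀ w ∈ W) (hW₁ : ∀ w ∈ W, J₁ w ∈ W)
    (β : (V ⧸ W) →ₗ[ℝ] (V ⧸ W) →ₗ[ℝ] ℝ)
    (hβ₀ : ∀ v : V, v ∉ W → 0 < β (W.mkQ v) (W.mkQ (J₀ v)))
    (hβ₁ : ∀ v : V, v ∉ W → 0 < β (W.mkQ v) (W.mkQ (J₁ v)))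
    (hWpos₀ : ∀ w ∈ W, w ≠ 0 → 0 < ω₀ w (J₀ w))
    (hWpos₁ : ∀ w ∈ W, w ≠ 0 → 0 < ω₁ w (J₀ w)) :
    ∃ K : ℝ, 0 ≤ K ∧ ∀ t ∈ Set.Icc (0 : ℝ) 1, ∀ v : V, v ≠ 0 →
      (v ∉ W →
        0 < (1 - t) * ω₀ v (J₀ v) + t * ω₁ v (J₀ v)
            + K * β (W.mkQ v) (W.mkQ (J₀ v))) ∧
      (v ∈ W → 0 < (1 - t) * ω₀ v (J₀ v) + t * ω₁ v (J₀ v)) := by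
  classical
  suffices h : ∃ K : ℝ, 0 ≤ K ∧ ∀ v : V, v ≠ 0 → ∀ t ∈ Set.Icc (0:ℝ) 1,
      0 < (1 - t) * ω₀ v (J₀ v) + t * ω₁ v (J₀ v) + K * β (W.mkQ v) (W.mkQ (J₀ v)) by
    obtain ⟨K, hK0, hK⟩ := h
    refine ⟨K, hK0, fun t ht v hv => ⟨fun _ => hK v hv t ht, fun hvW => ?_⟩⟩
    have hz : W.mkQ v = 0 := by
      simpa [Submodule.mkQ_apply] using (Submodule.Quotient.mk_eq_zero W).2 hvW
    have h2 := hK v hv t ht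
    rw [hz] at h2
    simpa using h2
  set n := Module.finrank ℝ V with hn
  set e : V ≃ₗ[ℝ] (Fin n → ℝ) := (Module.finBasis ℝ V).equivFun with he
  set q₀ : (Fin n → ℝ) → ℝ := fun x => ω₀ (e.symm x) (J₀ (e.symm x)) with hq₀def
  set q₁ : (Fin n → ℝ) → ℝ := fun x => ω₁ (e.symm x) (J₀ (e.symm x)) with hq₁def
  set b : (Fin n → ℝ) → ℝ := fun x => β (W.mkQ (e.symm x)) (W.mkQ (J₀ (e.symm x))) with hbdef
  have hq₀c : Continuous q₀ := by
    have hform : q₀ = fun x => (ω₀.compl₁₂ e.symm.toLinearMap e.symm.toLinearMap) x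
        ((e.toLinearMap ∘ₗ J₀ ∘ₗ e.symm.toLinearMap) x) := by
      funext x; simp [hq₀def]
    rw [hform]; exact quad_cont _ _
  have hq₁c : Continuous q₁ := by
    have hform : q₁ = fun x => (ω₁.compl₁₂ e.symm.toLinearMap e.symm.toLinearMap) x
        ((e.toLinearMap ∘ₗ J₀ ∘ₗ e.symm.toLinearMap) x) := by
      funext x; simp [hq₁def]
    rw [hform]; exact quad_cont _ _
  have hbc : Continuous b := by
    have hform : b = fun x => (β.compl₁₂ (W.mkQ ∘ₗ e.symm.toLinearMap) (W.mkQ ∘ₗ e.symm.toLinearMap)) x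
        ((e.toLinearMap ∘ₗ J₀ ∘ₗ e.symm.toLinearMap) x) := by
      funext x; simp [hbdef]
    rw [hform]; exact quad_cont _ _
  have hbnn : ∀ x, 0 ≤ b x := by
    intro x
    by_cases hmem : e.symm x ∈ W
    · have hz : W.mkQ (e.symm x) = 0 := by
        simpa [Submodule.mkQ_apply] using (Submodule.Quotient.mk_eq_zero W).2 hmem
      show (0:ℝ) ≤ β (W.mkQ (e.symm x)) (W.mkQ (J₀ (e.symm x)))
      rw [hz]; simp
    · exact (hβ₀ _ hmem).le
  have hpos : ∀ x : Fin n → ℝ, ‖x‖ = 1 → b x = 0 → 0 < q₀ x ∧ 0 < q₁ x := by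
    intro x hx hbx
    have hx0 : x ≠ 0 := by
      intro h; rw [h] at hx; simp at hx
    have hv0 : e.symm x ≠ 0 := by
      intro h
      apply hx0
      have h2 := congrArg e h
      simpa using h2
    have hvW : e.symm x ∈ W := by
      by_contra hmem
      exact (hβ₀ _ hmem).ne' hbx
    exact ⟨hWpos₀ _ hvW hv0, hWpos₁ _ hvW hv0⟩
  obtain ⟨K, hK0, hKs⟩ := sphere_bound q₀ q₁ b hq₀c hq₁c hbc hbnn hpos
  refine ⟨K, hK0, ?_⟩
  intro v hv t ht
  have hy0 : e v ≠ 0 := by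
    intro h
    apply hv
    have h2 := congrArg e.symm h
    simpa using h2
  set c : ℝ := ‖e v‖ with hcdef
  have hc : (0:ℝ) < c := norm_pos_iff.2 hy0
  set x : Fin n → ℝ := c⁻¹ • (e v) with hxdef
  have hxnorm : ‖x‖ = 1 := by
    rw [hxdef, norm_smul, norm_inv, norm_norm]
    exact inv_mul_cancel₀ hc.ne'
  have hesymm : e.symm x = c⁻¹ • v := by
    rw [hxdef]; simp
  have hq0x : q₀ x = c⁻¹ * (c⁻¹ * ω₀ v (J₀ v)) := by
    show ω₀ (e.symm x) (J₀ (e.symm x)) = _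
    rw [hesymm]
    simp only [map_smul, LinearMap.smul_apply, smul_eq_mul]
  have hq1x : q₁ x = c⁻¹ * (c⁻¹ * ω₁ v (J₀ v)) := by
    show ω₁ (e.symm x) (J₀ (e.symm x)) = _
    rw [hesymm]
    simp only [map_smul, LinearMap.smul_apply, smul_eq_mul]
  have hbx : b x = c⁻¹ * (c⁻¹ * β (W.mkQ v) (W.mkQ (J₀ v))) := by
    show β (W.mkQ (e.symm x)) (W.mkQ (J₀ (e.symm x))) = _
    rw [hesymm]
    simp only [map_smul, LinearMap.smul_apply, smul_eq_mul]
  have hkey := hKs x hxnorm t ht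
  rw [hq0x, hq1x, hbx] at hkey
  have hE : (1 - t) * (c⁻¹ * (c⁻¹ * ω₀ v (J₀ v))) + t * (c⁻¹ * (c⁻¹ * ω₁ v (J₀ v)))
      + K * (c⁻¹ * (c⁻¹ * β (W.mkQ v) (W.mkQ (J₀ v))))
      = c⁻¹ * (c⁻¹ * ((1 - t) * ω₀ v (J₀ v) + t * ω₁ v (J₀ v)
          + K * β (W.mkQ v) (W.mkQ (J₀ v)))) := by ring
  rw [hE] at hkey
  exact pos_of_inv_sq c _ hc hkey
end

section
/- In H_2(S²×S², ℤ) with basis f, s (f² = s² = 0, f·s = 1), suppose K = 2f + 2s = [C_1] + [C_2] + [C_3] is a 3-cycle decomposition into sphere classes with all pairwise intersections equal to 1. Then up to permutation, ([C_1],[C_2],[C_3]) = (f + b s, f + (1−b) s, s) or the f↔s symmetric version, for some integer b. -/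
/-- Every 3-cycle decomposition of K = 2f + 2s into sphere classes with all pairwise
    intersections 1 is, up to permutation and the symmetry swapping f and s,
    (f + b·s, f + (1-b)·s, s) for some integer b. -/
theorem stmt_16 (C : Fin 3 → ℤ × ℤ)
    (hadj : ∀ i, pairSS (C i) (C i) + 2 = pairSS (C i) KSS)
    (hsum : ∑ i, C i = KSS)
    (hint : ∀ i j, i ≠ j → pairSS (C i) (C j) = 1) :
    ∃ σ : Equiv.Perm (Fin 3), ∃ b : ℤ,
      (C (σ 0) = (1, b) ∧ C (σ 1) = (1, 1 - b) ∧ C (σ 2) = (0, 1)) ∨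
      (C (σ 0) = (b, 1) ∧ C (σ 1) = (1 - b, 1) ∧ C (σ 2) = (1, 0)) := by
  have key : ∀ i, (C i).1 = 1 ∨ (C i).2 = 1 := by
    intro i
    have h := hadj i
    simp only [pairSS, KSS] at h
    have h2 : ((C i).1 - 1) * ((C i).2 - 1) = 0 := by nlinarith [h]
    rcases mul_eq_zero.1 h2 with h | h
    · left; linarith
    · right; linarith
  have hs := hsum
  rw [Fin.sum_univ_three, Prod.ext_iff] at hs
  obtain ⟨hs1, hs2⟩ := hs
  simp only [Prod.fst_add, Prod.snd_add, KSS] at hs1 hs2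
  have e1 : ((Equiv.refl (Fin 3)) 0 = 0 ∧ (Equiv.refl (Fin 3)) 1 = 1 ∧
      (Equiv.refl (Fin 3)) 2 = 2) := by decide
  have e2 : ((Equiv.swap 1 2 : Equiv.Perm (Fin 3)) 0 = 0 ∧
      (Equiv.swap 1 2 : Equiv.Perm (Fin 3)) 1 = 2 ∧
      (Equiv.swap 1 2 : Equiv.Perm (Fin 3)) 2 = 1) := by decide
  have e3 : ((finRotate 3) 0 = 1 ∧ (finRotate 3) 1 = 2 ∧ (finRotate 3) 2 = 0) := by decide
  rcases key 0 with h0 | h0 <;> rcases key 1 with h1 | h1 <;> rcases key 2 with h2 | h2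
  · omega
  · exact ⟨Equiv.refl (Fin 3), (C 0).2, Or.inl ⟨by rw [e1.1, Prod.ext_iff]; exact ⟨by omega, by omega⟩,
      by rw [e1.2.1, Prod.ext_iff]; exact ⟨by omega, by omega⟩,
      by rw [e1.2.2, Prod.ext_iff]; exact ⟨by omega, by omega⟩⟩⟩
  · exact ⟨Equiv.swap 1 2, (C 0).2, Or.inl ⟨by rw [e2.1, Prod.ext_iff]; exact ⟨by omega, by omega⟩,
      by rw [e2.2.1, Prod.ext_iff]; exact ⟨by omega, by omega⟩,
      by rw [e2.2.2, Prod.ext_iff]; exact ⟨by omega, by omega⟩⟩⟩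
  · exact ⟨finRotate 3, (C 1).1, Or.inr ⟨by rw [e3.1, Prod.ext_iff]; exact ⟨by omega, by omega⟩,
      by rw [e3.2.1, Prod.ext_iff]; exact ⟨by omega, by omega⟩,
      by rw [e3.2.2, Prod.ext_iff]; exact ⟨by omega, by omega⟩⟩⟩
  · exact ⟨finRotate 3, (C 1).2, Or.inl ⟨by rw [e3.1, Prod.ext_iff]; exact ⟨by omega, by omega⟩,
      by rw [e3.2.1, Prod.ext_iff]; exact ⟨by omega, by omega⟩,
      by rw [e3.2.2, Prod.ext_iff]; exact ⟨by omega, by omega⟩⟩⟩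
  · exact ⟨Equiv.swap 1 2, (C 0).1, Or.inr ⟨by rw [e2.1, Prod.ext_iff]; exact ⟨by omega, by omega⟩,
      by rw [e2.2.1, Prod.ext_iff]; exact ⟨by omega, by omega⟩,
      by rw [e2.2.2, Prod.ext_iff]; exact ⟨by omega, by omega⟩⟩⟩
  · exact ⟨Equiv.refl (Fin 3), (C 0).1, Or.inr ⟨by rw [e1.1, Prod.ext_iff]; exact ⟨by omega, by omega⟩,
      by rw [e1.2.1, Prod.ext_iff]; exact ⟨by omega, by omega⟩,
      by rw [e1.2.2, Prod.ext_iff]; exact ⟨by omega, by omega⟩⟩⟩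
  · omega
end
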